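/- On the Hilbert space H = ℓ²(Λ) with orthonormal basis e^{(n)}_{ij} indexed by Λ = {(n,i,j) : 2n ∈ ℕ, i,j ∈ {-n,…,n}}, define bounded operators α and β by: α e^{(n)}_{ij} = e^{(n-1/2)}_{i-1/2,j-1/2} if i > -n and j > -n, and α e^{(n)}_{ij} = 0 if i = -n or j = -n; β e^{(n)}_{ij} = 0 if i ≠ -n and j ≠ -n; β e^{(n)}_{-n,j} = e^{(n-1/2)}_{-(n-1/2),j-1/2} for j ≠ -n; and β e^{(n)}_{i,-n} = -e^{(n+1/2)}_{i+1/2,-(n+1/2)}. Then these operators satisfy α*α + β*β = 1, αα* = 1, αβ = 0, αβ* = 0, and ββ* = β*β; moreover β*β is the orthogonal projection onto the closed span of the basis vectors e^{(n)}_{ij} with i = -n or j = -n. -/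

import Mathlib

/-- The index set `Λ = {(n,i,j) : 2n ∈ ℕ, i,j ∈ {-n,…,n}}`, encoded via the integer
coordinates `n₂ = 2n`, `x = n+i ∈ {0,…,2n}`, `y = n+j ∈ {0,…,2n}` (so `i = -n ↔ x = 0`,
`j = -n ↔ y = 0`). -/
abbrev Idx : Type := {p : ℕ × ℕ × ℕ // p.2.1 ≤ p.1 ∧ p.2.2 ≤ p.1}

/-- The Hilbert space `H = ℓ²(Λ)`. -/
abbrev Hsp : Type := lp (fun _ : Idx => ℂ) 2

/-- The orthonormal basis vector `e^{(n)}_{ij}` of `H`. -/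
noncomputable def bv (p : Idx) : Hsp := lp.single 2 p 1

/-- `vec n x y` is the basis vector with (integer-encoded) indices `(n,x,y)` when those
indices lie in `Λ`, and `0` otherwise. -/
noncomputable def vec (n x y : ℤ) : Hsp :=
  if h : 0 ≤ n ∧ 0 ≤ x ∧ x ≤ n ∧ 0 ≤ y ∧ y ≤ n then
    bv ⟨(n.toNat, x.toNat, y.toNat), by refine ⟨?_, ?_⟩ <;> dsimp only <;> omega⟩
  else 0

/-- The continuous linear map `ι_K ∘ (orthogonal projection onto K)` of a closed
submodule `K`, as an operator on the ambient Hilbert space. -/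
noncomputable def projCLM (K : Submodule ℂ Hsp) (hK : IsClosed (K : Set Hsp)) :
    Hsp →L[ℂ] Hsp :=
  haveI : CompleteSpace K := hK.completeSpace_coe
  K.subtypeL ∘L K.orthogonalProjection

/- ### Auxiliary development -/

open scoped ComplexConjugate ENNReal NNReal

local notation "⟪" x ", " y "⟫" => @inner ℂ _ _ x y

namespace QSU2

/-- `Good c H` : the data defining a "weighted composition operator" on `ℓ²(Λ)` is admissible:
coefficients bounded by 1 and `H` injective on the support of `c`. -/
def Good (c : Idx → ℂ) (H : Idx → Idx) : Prop :=
  (∀ q, ‖c q‖ ≤ 1) ∧ ∀ q q', c q ≠ 0 → c q' ≠ 0 → H q = H q' → q = q'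

theorem sum_le {c : Idx → ℂ} {H : Idx → Idx} (hg : Good c H) (x : Hsp) (s : Finset Idx) :
    ∑ q ∈ s, ‖c q * x (H q)‖ ^ (2 : ℝ≥0∞).toReal ≤ ‖x‖ ^ (2 : ℝ≥0∞).toReal := by
  classical
  have h0 : (0:ℝ) < (2 : ℝ≥0∞).toReal := by norm_num
  calc
    ∑ q ∈ s, ‖c q * x (H q)‖ ^ (2 : ℝ≥0∞).toReal
        ≤ ∑ q ∈ s.filter (fun q => c q ≠ 0), ‖x (H q)‖ ^ (2 : ℝ≥0∞).toReal := by
          rw [← Finset.sum_filter_add_sum_filter_not s (fun q => c q ≠ 0)]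
          have hz : ∑ q ∈ s.filter (fun q => ¬ c q ≠ 0),
              ‖c q * x (H q)‖ ^ (2 : ℝ≥0∞).toReal = 0 := by
            apply Finset.sum_eq_zero
            intro q hq
            simp only [Finset.mem_filter, not_not] at hq
            rw [hq.2, zero_mul, norm_zero, Real.zero_rpow (ne_of_gt h0)]
          rw [hz, add_zero]
          apply Finset.sum_le_sum
          intro q _
          apply Real.rpow_le_rpow (norm_nonneg _) _ (le_of_lt h0)
          rw [norm_mul]
          calc ‖c q‖ * ‖x (H q)‖ ≤ 1 * ‖x (H q)‖ := by
                apply mul_le_mul_of_nonneg_right (hg.1 q) (norm_nonneg _)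
            _ = ‖x (H q)‖ := one_mul _
    _ = ∑ p ∈ (s.filter (fun q => c q ≠ 0)).image H, ‖x p‖ ^ (2 : ℝ≥0∞).toReal := by
          rw [Finset.sum_image]
          intro q hq q' hq' hH
          simp only [Finset.coe_filter, Finset.mem_coe, Finset.mem_filter, Set.mem_setOf_eq] at hq hq'
          exact hg.2 q q' hq.2 hq'.2 hH
    _ ≤ ‖x‖ ^ (2 : ℝ≥0∞).toReal := lp.sum_rpow_le_norm_rpow h0 x _

theorem memℓp_comp {c : Idx → ℂ} {H : Idx → Idx} (hg : Good c H) (x : Hsp) :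
    Memℓp (fun q => c q * x (H q)) 2 := by
  apply memℓp_gen
  apply summable_of_sum_le (c := ‖x‖ ^ (2 : ℝ≥0∞).toReal)
  · intro q
    exact Real.rpow_nonneg (norm_nonneg _) _
  · intro u
    exact sum_le hg x u

/-- The weighted composition operator `x ↦ (q ↦ c q * x (H q))`. -/
noncomputable def compOp (c : Idx → ℂ) (H : Idx → Idx) (hg : Good c H) : Hsp →L[ℂ] Hsp :=
  LinearMap.mkContinuous
    { toFun := fun x => (⟨fun q => c q * x (H q), memℓp_comp hg x⟩ : Hsp)
      map_add' := fun x y => by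
        apply lp.ext
        funext q
        have : ((x + y : Hsp) : ∀ _ : Idx, ℂ) = (x : ∀ _ : Idx, ℂ) + y := lp.coeFn_add x y
        simp only [this, Pi.add_apply]
        show c q * ((x : ∀ _ : Idx, ℂ) (H q) + y (H q))
            = c q * x (H q) + c q * y (H q)
        ring
      map_smul' := fun a x => by
        apply lp.ext
        funext q
        have : ((a • x : Hsp) : ∀ _ : Idx, ℂ) = a • (x : ∀ _ : Idx, ℂ) := lp.coeFn_smul a x
        simp only [this, Pi.smul_apply, smul_eq_mul, RingHom.id_apply]
        show c q * (a * x (H q)) = a * (c q * x (H q))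
        ring }
    1
    (fun x => by
      rw [one_mul]
      apply lp.norm_le_of_forall_sum_le (by norm_num) (norm_nonneg x)
      intro s
      exact sum_le hg x s)

theorem compOp_apply {c : Idx → ℂ} {H : Idx → Idx} (hg : Good c H) (x : Hsp) (q : Idx) :
    compOp c H hg x q = c q * x (H q) := rfl

theorem bv_apply_self (p : Idx) : bv p p = 1 := lp.single_apply_self 2 p 1

theorem bv_apply_ne (p : Idx) {q : Idx} (h : q ≠ p) : bv p q = 0 := lp.single_apply_ne 2 p 1 h

theorem compOp_bv {c : Idx → ℂ} {H : Idx → Idx} (hg : Good c H) {p q₀ : Idx}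
    (h : H q₀ = p) (h0 : c q₀ ≠ 0) :
    compOp c H hg (bv p) = c q₀ • bv q₀ := by
  apply lp.ext
  funext q
  have hs : ((c q₀ • bv q₀ : Hsp) : ∀ _ : Idx, ℂ) = c q₀ • (bv q₀ : ∀ _ : Idx, ℂ) :=
    lp.coeFn_smul _ _
  rw [compOp_apply]
  show c q * (bv p) (H q) = (c q₀ • bv q₀ : Hsp) q
  rw [hs]
  simp only [Pi.smul_apply, smul_eq_mul]
  by_cases hq : q = q₀
  · subst hq
    rw [h, bv_apply_self, bv_apply_self]
  · rw [bv_apply_ne q₀ hq, mul_zero]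
    by_cases hcq : c q = 0
    · rw [hcq, zero_mul]
    · have : H q ≠ p := by
        intro hHq
        exact hq (hg.2 q q₀ hcq h0 (hHq.trans h.symm))
      rw [bv_apply_ne p this, mul_zero]

theorem compOp_bv_zero {c : Idx → ℂ} {H : Idx → Idx} (hg : Good c H) {p : Idx}
    (h : ∀ q, c q ≠ 0 → H q ≠ p) :
    compOp c H hg (bv p) = 0 := by
  apply lp.ext
  funext q
  rw [compOp_apply]
  show c q * (bv p) (H q) = (0 : Hsp) q
  have h0 : ((0 : Hsp) : ∀ _ : Idx, ℂ) = 0 := lp.coeFn_zero _ _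
  rw [h0, Pi.zero_apply]
  by_cases hcq : c q = 0
  · rw [hcq, zero_mul]
  · rw [bv_apply_ne p (h q hcq), mul_zero]

theorem good_comp {c c' : Idx → ℂ} {H H' : Idx → Idx} (hg : Good c H) (hg' : Good c' H') :
    Good (fun q => c q * c' (H q)) (H' ∘ H) := by
  constructor
  · intro q
    calc ‖c q * c' (H q)‖ = ‖c q‖ * ‖c' (H q)‖ := norm_mul _ _
      _ ≤ 1 * 1 := mul_le_mul (hg.1 q) (hg'.1 _) (norm_nonneg _) zero_le_one
      _ = 1 := one_mul 1
  · intro q q' hq hq' hH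
    have hcq : c q ≠ 0 := fun h => hq (by simp [h])
    have hcq' : c q' ≠ 0 := fun h => hq' (by simp [h])
    have hdq : c' (H q) ≠ 0 := fun h => hq (by simp [h])
    have hdq' : c' (H q') ≠ 0 := fun h => hq' (by simp [h])
    exact hg.2 q q' hcq hcq' (hg'.2 _ _ hdq hdq' hH)

theorem compOp_comp {c c' : Idx → ℂ} {H H' : Idx → Idx} (hg : Good c H) (hg' : Good c' H') :
    compOp c H hg ∘L compOp c' H' hg' =
      compOp (fun q => c q * c' (H q)) (H' ∘ H) (good_comp hg hg') := by
  apply ContinuousLinearMap.ext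
  intro x
  apply lp.ext
  funext q
  rw [ContinuousLinearMap.comp_apply, compOp_apply, compOp_apply, compOp_apply]
  simp only [Function.comp_apply]
  try ring

theorem compOp_congr {c c' : Idx → ℂ} {H H' : Idx → Idx} (hg : Good c H) (hg' : Good c' H')
    (hcc : ∀ q, c q = c' q) (hHH : ∀ q, c q ≠ 0 → H q = H' q) :
    compOp c H hg = compOp c' H' hg' := by
  apply ContinuousLinearMap.ext
  intro x
  apply lp.ext
  funext q
  rw [compOp_apply, compOp_apply]
  by_cases hcq : c q = 0
  · rw [hcq, ← hcc q, hcq, zero_mul, zero_mul]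
  · rw [← hcc q, hHH q hcq]

theorem good_one : Good (fun _ => 1) (id : Idx → Idx) := by
  constructor
  · intro q; simp
  · intro q q' _ _ h; exact h

theorem compOp_one : compOp (fun _ => 1) id good_one = 1 := by
  apply ContinuousLinearMap.ext
  intro x
  apply lp.ext
  funext q
  rw [compOp_apply]
  show 1 * x q = ((1 : Hsp →L[ℂ] Hsp) x) q
  rw [ContinuousLinearMap.one_apply, one_mul]

theorem compOp_zero {c : Idx → ℂ} {H : Idx → Idx} (hg : Good c H) (hc : ∀ q, c q = 0) :
    compOp c H hg = 0 := by
  apply ContinuousLinearMap.ext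
  intro x
  apply lp.ext
  funext q
  rw [compOp_apply, hc, zero_mul]
  show (0:ℂ) = ((0 : Hsp →L[ℂ] Hsp) x) q
  rw [ContinuousLinearMap.zero_apply]
  exact (congrFun (lp.coeFn_zero (fun _ : Idx => ℂ) 2) q).symm

theorem inner_comp (c : Idx → ℂ) (H : Idx → Idx) (hg : Good c H) (x y : Hsp) :
    ⟪compOp c H hg x, y⟫ = ∑' q, conj (c q * x (H q)) * y q := by
  rw [lp.inner_eq_tsum]
  congr 1
  funext q
  exact RCLike.inner_apply' _ _

theorem compOp_adjoint {c d : Idx → ℂ} {H K : Idx → Idx} (hg : Good c H) (hg' : Good d K)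
    (h1 : ∀ q, c q ≠ 0 → K (H q) = q ∧ d (H q) = conj (c q))
    (h2 : ∀ p, d p ≠ 0 → H (K p) = p ∧ c (K p) = conj (d p)) :
    ContinuousLinearMap.adjoint (compOp c H hg) = compOp d K hg' := by
  symm
  rw [ContinuousLinearMap.eq_adjoint_iff]
  intro x y
  rw [inner_comp, lp.inner_eq_tsum]
  -- LHS : ∑' p, conj (d p * x (K p)) * y p
  -- RHS : ∑' q, conj (x q) * (c q * y (H q))
  have hRHS : ∀ q : Idx, (⟪x q, compOp c H hg y q⟫ : ℂ) = conj (x q) * (c q * y (H q)) := by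
    intro q
    rw [compOp_apply]
    exact RCLike.inner_apply' _ _
  simp only [hRHS]
  apply tsum_eq_tsum_of_ne_zero_bij
    (i := fun (q : Function.support fun q : Idx => conj (x q) * (c q * y (H q))) => H q.1)
  · -- injectivity
    rintro ⟨q, hq⟩ ⟨q', hq'⟩ hH
    simp only [Function.mem_support] at hq hq'
    have hcq : c q ≠ 0 := by
      intro h; apply hq; rw [h]; ring
    have hcq' : c q' ≠ 0 := by
      intro h; apply hq'; rw [h]; ring
    exact Subtype.ext (hg.2 q q' hcq hcq' hH)
  · -- support condition
    rintro p hp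
    simp only [Function.mem_support] at hp
    have hdp : d p ≠ 0 := by
      intro h; apply hp; rw [h]; simp
    have hxKp : x (K p) ≠ 0 := by
      intro h; apply hp; rw [h]; simp
    have hyp : y p ≠ 0 := by
      intro h; apply hp; rw [h]; simp
    obtain ⟨hHK, hcK⟩ := h2 p hdp
    refine ⟨⟨K p, ?_⟩, hHK⟩
    simp only [Function.mem_support, hHK, hcK]
    intro h
    rcases mul_eq_zero.1 h with h' | h'
    · exact hxKp (by simpa using star_eq_zero.1 h')
    · rcases mul_eq_zero.1 h' with h'' | h''
      · exact hdp (by simpa using star_eq_zero.1 h'')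
      · exact hyp h''
  · -- values agree
    rintro ⟨q, hq⟩
    simp only [Function.mem_support] at hq
    have hcq : c q ≠ 0 := by
      intro h; apply hq; rw [h]; ring
    obtain ⟨hKH, hdH⟩ := h1 q hcq
    rw [hKH, hdH]
    simp only [map_mul, RingHomCompTriple.comp_apply, Complex.conj_conj, RingHom.id_apply]
    ring

/- ### The concrete operators -/

/-- The index map underlying `α⁎` : `(n,x,y) ↦ (n+1,x+1,y+1)`. -/
def Ha : Idx → Idx := fun q =>
  ⟨(q.1.1 + 1, q.1.2.1 + 1, q.1.2.2 + 1), by obtain ⟨h1, h2⟩ := q.2; refine ⟨?_, ?_⟩ <;> dsimp only <;> omega⟩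

/-- The index map underlying `α` : `(n,x,y) ↦ (n-1,x-1,y-1)` (truncated). -/
def Ka : Idx → Idx := fun q =>
  ⟨(q.1.1 - 1, q.1.2.1 - 1, q.1.2.2 - 1), by obtain ⟨h1, h2⟩ := q.2; refine ⟨?_, ?_⟩ <;> dsimp only <;> omega⟩

/-- Coefficient for `α`. -/
def ca : Idx → ℂ := fun _ => 1

/-- Coefficient for `α⁎`: indicator of the "interior". -/
def da : Idx → ℂ := fun q => if 0 < q.1.2.1 ∧ 0 < q.1.2.2 then 1 else 0

/-- The index map underlying `β`. -/
def Hb : Idx → Idx := fun q =>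
  if 0 < q.1.2.1 ∧ q.1.2.2 = 0 then
    ⟨(q.1.1 - 1, q.1.2.1 - 1, 0), by obtain ⟨h1, h2⟩ := q.2; refine ⟨?_, ?_⟩ <;> dsimp only <;> omega⟩
  else
    ⟨(q.1.1 + 1, 0, q.1.2.2 + 1), by obtain ⟨h1, h2⟩ := q.2; refine ⟨?_, ?_⟩ <;> dsimp only <;> omega⟩

/-- Coefficient for `β`. -/
def cb : Idx → ℂ := fun q =>
  if 0 < q.1.2.1 ∧ q.1.2.2 = 0 then -1 else if q.1.2.1 = 0 then 1 else 0

/-- The index map underlying `β⁎`. -/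
def Kb : Idx → Idx := fun p =>
  if p.1.2.2 = 0 then
    ⟨(p.1.1 + 1, p.1.2.1 + 1, 0), by obtain ⟨h1, h2⟩ := p.2; refine ⟨?_, ?_⟩ <;> dsimp only <;> omega⟩
  else
    ⟨(p.1.1 - 1, 0, p.1.2.2 - 1), by obtain ⟨h1, h2⟩ := p.2; refine ⟨?_, ?_⟩ <;> dsimp only <;> omega⟩

/-- Coefficient for `β⁎`. -/
def db : Idx → ℂ := fun p =>
  if p.1.2.2 = 0 then -1 else if p.1.2.1 = 0 then 1 else 0

theorem good_a : Good ca Ha := by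
  constructor
  · intro q; simp [ca]
  · intro q q' _ _ h
    apply Subtype.ext
    have := Subtype.ext_iff.1 h
    simp only [Ha, Prod.mk.injEq] at this
    obtain ⟨e1, e2, e3⟩ := this
    obtain ⟨⟨n, x, y⟩, _⟩ := q
    obtain ⟨⟨n', x', y'⟩, _⟩ := q'
    simp only [Prod.mk.injEq] at *
    omega

theorem of_ne_zero {P : Prop} [Decidable P] {a : ℂ} (h : (if P then a else (0:ℂ)) ≠ 0) : P := by
  by_contra hc
  rw [if_neg hc] at h
  exact h rfl

theorem idx_eq {q q' : Idx} (h1 : q.1.1 = q'.1.1) (h2 : q.1.2.1 = q'.1.2.1)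
    (h3 : q.1.2.2 = q'.1.2.2) : q = q' := by
  apply Subtype.ext
  obtain ⟨⟨n, x, y⟩, _⟩ := q
  obtain ⟨⟨n', x', y'⟩, _⟩ := q'
  simp only at h1 h2 h3
  simp only [Prod.mk.injEq]
  exact ⟨h1, h2, h3⟩

theorem idx_eq_iff {q q' : Idx} :
    q = q' ↔ (q.1.1 = q'.1.1 ∧ q.1.2.1 = q'.1.2.1 ∧ q.1.2.2 = q'.1.2.2) := by
  constructor
  · rintro rfl; exact ⟨rfl, rfl, rfl⟩
  · rintro ⟨h1, h2, h3⟩; exact idx_eq h1 h2 h3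

theorem Ha_coord (q : Idx) :
    (Ha q).1.1 = q.1.1 + 1 ∧ (Ha q).1.2.1 = q.1.2.1 + 1 ∧ (Ha q).1.2.2 = q.1.2.2 + 1 :=
  ⟨rfl, rfl, rfl⟩

theorem Ka_coord (q : Idx) :
    (Ka q).1.1 = q.1.1 - 1 ∧ (Ka q).1.2.1 = q.1.2.1 - 1 ∧ (Ka q).1.2.2 = q.1.2.2 - 1 :=
  ⟨rfl, rfl, rfl⟩

theorem Hb_coord_pos {q : Idx} (h : 0 < q.1.2.1 ∧ q.1.2.2 = 0) :
    (Hb q).1.1 = q.1.1 - 1 ∧ (Hb q).1.2.1 = q.1.2.1 - 1 ∧ (Hb q).1.2.2 = 0 := by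
  rw [Hb, if_pos h]
  exact ⟨rfl, rfl, rfl⟩

theorem Hb_coord_neg {q : Idx} (h : ¬(0 < q.1.2.1 ∧ q.1.2.2 = 0)) :
    (Hb q).1.1 = q.1.1 + 1 ∧ (Hb q).1.2.1 = 0 ∧ (Hb q).1.2.2 = q.1.2.2 + 1 := by
  rw [Hb, if_neg h]
  exact ⟨rfl, rfl, rfl⟩

theorem Kb_coord_pos {p : Idx} (h : p.1.2.2 = 0) :
    (Kb p).1.1 = p.1.1 + 1 ∧ (Kb p).1.2.1 = p.1.2.1 + 1 ∧ (Kb p).1.2.2 = 0 := by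
  rw [Kb, if_pos h]
  exact ⟨rfl, rfl, rfl⟩

theorem Kb_coord_neg {p : Idx} (h : ¬ p.1.2.2 = 0) :
    (Kb p).1.1 = p.1.1 - 1 ∧ (Kb p).1.2.1 = 0 ∧ (Kb p).1.2.2 = p.1.2.2 - 1 := by
  rw [Kb, if_neg h]
  exact ⟨rfl, rfl, rfl⟩

theorem cb_cases {q : Idx} (h : cb q ≠ 0) :
    (0 < q.1.2.1 ∧ q.1.2.2 = 0) ∨ (¬(0 < q.1.2.1 ∧ q.1.2.2 = 0) ∧ q.1.2.1 = 0) := by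
  by_cases h1 : 0 < q.1.2.1 ∧ q.1.2.2 = 0
  · exact Or.inl h1
  · refine Or.inr ⟨h1, ?_⟩
    rw [cb, if_neg h1] at h
    exact of_ne_zero h

theorem db_cases {p : Idx} (h : db p ≠ 0) :
    p.1.2.2 = 0 ∨ (¬ p.1.2.2 = 0 ∧ p.1.2.1 = 0) := by
  by_cases h1 : p.1.2.2 = 0
  · exact Or.inl h1
  · refine Or.inr ⟨h1, ?_⟩
    rw [db, if_neg h1] at h
    exact of_ne_zero h

theorem good_da : Good da Ka := by
  constructor
  · intro q; rw [da]; split_ifs <;> simp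
  · intro q q' hq hq' h
    have h1 : 0 < q.1.2.1 ∧ 0 < q.1.2.2 := of_ne_zero hq
    have h2 : 0 < q'.1.2.1 ∧ 0 < q'.1.2.2 := of_ne_zero hq'
    have hb := q.2
    have hb' := q'.2
    rw [idx_eq_iff] at h
    obtain ⟨e1, e2, e3⟩ := h
    rw [(Ka_coord q).1, (Ka_coord q').1] at e1
    rw [(Ka_coord q).2.1, (Ka_coord q').2.1] at e2
    rw [(Ka_coord q).2.2, (Ka_coord q').2.2] at e3
    apply idx_eq <;> omega

theorem good_b : Good cb Hb := by
  constructor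
  · intro q; rw [cb]; split_ifs <;> simp
  · intro q q' hq hq' h
    have hb := q.2
    have hb' := q'.2
    rw [idx_eq_iff] at h
    obtain ⟨e1, e2, e3⟩ := h
    rcases cb_cases hq with h1 | h1 <;> rcases cb_cases hq' with h2 | h2
    · obtain ⟨f1, f2, f3⟩ := Hb_coord_pos h1
      obtain ⟨g1, g2, g3⟩ := Hb_coord_pos h2
      rw [f1, g1] at e1; rw [f2, g2] at e2
      apply idx_eq <;> omega
    · obtain ⟨f1, f2, f3⟩ := Hb_coord_pos h1
      obtain ⟨g1, g2, g3⟩ := Hb_coord_neg h2.1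
      rw [f3, g3] at e3
      omega
    · obtain ⟨f1, f2, f3⟩ := Hb_coord_neg h1.1
      obtain ⟨g1, g2, g3⟩ := Hb_coord_pos h2
      rw [f3, g3] at e3
      omega
    · obtain ⟨f1, f2, f3⟩ := Hb_coord_neg h1.1
      obtain ⟨g1, g2, g3⟩ := Hb_coord_neg h2.1
      rw [f1, g1] at e1; rw [f3, g3] at e3
      apply idx_eq <;> omega

theorem good_db : Good db Kb := by
  constructor
  · intro q; rw [db]; split_ifs <;> simp
  · intro q q' hq hq' h
    have hb := q.2
    have hb' := q'.2
    rw [idx_eq_iff] at h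
    obtain ⟨e1, e2, e3⟩ := h
    rcases db_cases hq with h1 | h1 <;> rcases db_cases hq' with h2 | h2
    · obtain ⟨f1, f2, f3⟩ := Kb_coord_pos h1
      obtain ⟨g1, g2, g3⟩ := Kb_coord_pos h2
      rw [f1, g1] at e1; rw [f2, g2] at e2
      apply idx_eq <;> omega
    · obtain ⟨f1, f2, f3⟩ := Kb_coord_pos h1
      obtain ⟨g1, g2, g3⟩ := Kb_coord_neg h2.1
      rw [f2, g2] at e2
      omega
    · obtain ⟨f1, f2, f3⟩ := Kb_coord_neg h1.1
      obtain ⟨g1, g2, g3⟩ := Kb_coord_pos h2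
      rw [f2, g2] at e2
      omega
    · obtain ⟨f1, f2, f3⟩ := Kb_coord_neg h1.1
      obtain ⟨g1, g2, g3⟩ := Kb_coord_neg h2.1
      rw [f1, g1] at e1; rw [f3, g3] at e3
      apply idx_eq <;> omega

/-- The boundary indicator coefficient. -/
def bnd : Idx → ℂ := fun q => if q.1.2.1 = 0 ∨ q.1.2.2 = 0 then 1 else 0

theorem good_bnd : Good bnd id := by
  constructor
  · intro q; rw [bnd]; split_ifs <;> simp
  · intro q q' _ _ h; exact h

theorem good_da_id : Good da id := by
  constructor
  · intro q; rw [da]; split_ifs <;> simp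
  · intro q q' _ _ h; exact h

/-- `α` -/
noncomputable def opA : Hsp →L[ℂ] Hsp := compOp ca Ha good_a

/-- `β` -/
noncomputable def opB : Hsp →L[ℂ] Hsp := compOp cb Hb good_b

theorem ca_ne (q : Idx) : ca q ≠ 0 := one_ne_zero

theorem adj_a : ContinuousLinearMap.adjoint opA = compOp da Ka good_da := by
  apply compOp_adjoint
  · intro q _
    constructor
    · have hc := Ha_coord q
      have kc := Ka_coord (Ha q)
      apply idx_eq <;> omega
    · have hc := Ha_coord q
      rw [da, if_pos (by omega), ca]
      simp
  · intro p hp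
    have h1 : 0 < p.1.2.1 ∧ 0 < p.1.2.2 := of_ne_zero hp
    have hb := p.2
    constructor
    · have kc := Ka_coord p
      have hc := Ha_coord (Ka p)
      apply idx_eq <;> omega
    · rw [ca, da, if_pos h1]
      simp

theorem adj_b : ContinuousLinearMap.adjoint opB = compOp db Kb good_db := by
  apply compOp_adjoint
  · intro q hq
    have hb := q.2
    rcases cb_cases hq with h1 | h1
    · obtain ⟨f1, f2, f3⟩ := Hb_coord_pos h1
      have kc := Kb_coord_pos (p := Hb q) f3
      constructor
      · apply idx_eq <;> omega
      · rw [db, if_pos f3, cb, if_pos h1]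
        simp
    · obtain ⟨f1, f2, f3⟩ := Hb_coord_neg h1.1
      have kc := Kb_coord_neg (p := Hb q) (by omega)
      constructor
      · apply idx_eq <;> omega
      · rw [db, if_neg (by omega), if_pos f2, cb, if_neg h1.1, if_pos h1.2]
        simp
  · intro p hp
    have hb := p.2
    rcases db_cases hp with h1 | h1
    · obtain ⟨f1, f2, f3⟩ := Kb_coord_pos h1
      have hc := Hb_coord_pos (q := Kb p) (by omega)
      constructor
      · apply idx_eq <;> omega
      · rw [cb, if_pos (by omega), db, if_pos h1]
        simp
    · obtain ⟨f1, f2, f3⟩ := Kb_coord_neg h1.1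
      have hc := Hb_coord_neg (q := Kb p) (by omega)
      constructor
      · apply idx_eq <;> omega
      · rw [cb, if_neg (by omega), if_pos f2, db, if_neg h1.1, if_pos h1.2]
        simp

theorem rel_aastar : opA ∘L ContinuousLinearMap.adjoint opA = 1 := by
  rw [adj_a, opA, compOp_comp]
  rw [compOp_congr (good_comp good_a good_da) good_one
    (fun q => ?_) (fun q _ => ?_), compOp_one]
  · have hc := Ha_coord q
    rw [ca, da, if_pos (by omega)]
    simp
  · have hc := Ha_coord q
    have kc := Ka_coord (Ha q)
    show Ka (Ha q) = q
    apply idx_eq <;> omega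

theorem rel_astara : ContinuousLinearMap.adjoint opA ∘L opA = compOp da id good_da_id := by
  rw [adj_a, opA, compOp_comp]
  apply compOp_congr
  · intro q
    rw [ca, mul_one]
  · intro q hq
    have hda : da q ≠ 0 := fun h => hq (by simp [h])
    have h1 : 0 < q.1.2.1 ∧ 0 < q.1.2.2 := of_ne_zero hda
    have hb := q.2
    have kc := Ka_coord q
    have hc := Ha_coord (Ka q)
    show Ha (Ka q) = q
    apply idx_eq <;> omega

theorem rel_bstarb : ContinuousLinearMap.adjoint opB ∘L opB = compOp bnd id good_bnd := by
  rw [adj_b, opB, compOp_comp]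
  apply compOp_congr
  · intro q
    have hb := q.2
    by_cases h1 : q.1.2.2 = 0
    · obtain ⟨f1, f2, f3⟩ := Kb_coord_pos h1
      rw [db, if_pos h1, cb, if_pos (by omega), bnd, if_pos (Or.inr h1)]
      norm_num
    · by_cases h2 : q.1.2.1 = 0
      · obtain ⟨f1, f2, f3⟩ := Kb_coord_neg h1
        rw [db, if_neg h1, if_pos h2, cb, if_neg (by omega), if_pos f2, bnd,
          if_pos (Or.inl h2)]
        norm_num
      · rw [db, if_neg h1, if_neg h2, bnd, if_neg (by omega)]
        norm_num
  · intro q hq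
    have hdb : db q ≠ 0 := fun h => hq (by simp [h])
    have hb := q.2
    show Hb (Kb q) = q
    rcases db_cases hdb with h1 | h1
    · obtain ⟨f1, f2, f3⟩ := Kb_coord_pos h1
      obtain ⟨g1, g2, g3⟩ := Hb_coord_pos (q := Kb q) (by omega)
      apply idx_eq <;> omega
    · obtain ⟨f1, f2, f3⟩ := Kb_coord_neg h1.1
      obtain ⟨g1, g2, g3⟩ := Hb_coord_neg (q := Kb q) (by omega)
      apply idx_eq <;> omega

theorem rel_bbstar : opB ∘L ContinuousLinearMap.adjoint opB = compOp bnd id good_bnd := by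
  rw [adj_b, opB, compOp_comp]
  apply compOp_congr
  · intro q
    have hb := q.2
    by_cases h1 : 0 < q.1.2.1 ∧ q.1.2.2 = 0
    · obtain ⟨f1, f2, f3⟩ := Hb_coord_pos h1
      rw [cb, if_pos h1, db, if_pos f3, bnd, if_pos (Or.inr h1.2)]
      norm_num
    · by_cases h2 : q.1.2.1 = 0
      · obtain ⟨f1, f2, f3⟩ := Hb_coord_neg h1
        rw [cb, if_neg h1, if_pos h2, db, if_neg (by omega), if_pos f2, bnd,
          if_pos (Or.inl h2)]
        norm_num
      · rw [cb, if_neg h1, if_neg h2, bnd, if_neg (by omega)]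
        norm_num
  · intro q hq
    have hcb : cb q ≠ 0 := fun h => hq (by simp [h])
    have hb := q.2
    show Kb (Hb q) = q
    rcases cb_cases hcb with h1 | h1
    · obtain ⟨f1, f2, f3⟩ := Hb_coord_pos h1
      obtain ⟨g1, g2, g3⟩ := Kb_coord_pos (p := Hb q) f3
      apply idx_eq <;> omega
    · obtain ⟨f1, f2, f3⟩ := Hb_coord_neg h1.1
      obtain ⟨g1, g2, g3⟩ := Kb_coord_neg (p := Hb q) (by omega)
      apply idx_eq <;> omega

theorem rel_ab : opA ∘L opB = 0 := by
  rw [opA, opB, compOp_comp]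
  apply compOp_zero
  intro q
  have hc := Ha_coord q
  rw [ca, cb, if_neg (by omega), if_neg (by omega)]
  ring

theorem rel_abstar : opA ∘L ContinuousLinearMap.adjoint opB = 0 := by
  rw [adj_b, opA, compOp_comp]
  apply compOp_zero
  intro q
  have hc := Ha_coord q
  rw [ca, db, if_neg (by omega), if_neg (by omega)]
  ring

theorem rel_sum : ContinuousLinearMap.adjoint opA ∘L opA
    + ContinuousLinearMap.adjoint opB ∘L opB = 1 := by
  rw [rel_astara, rel_bstarb]
  apply ContinuousLinearMap.ext
  intro x
  apply lp.ext
  funext q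
  have hadd : ((compOp da id good_da_id x + compOp bnd id good_bnd x : Hsp) : ∀ _ : Idx, ℂ)
      = (compOp da id good_da_id x : ∀ _ : Idx, ℂ) + (compOp bnd id good_bnd x) :=
    lp.coeFn_add _ _
  rw [ContinuousLinearMap.add_apply]
  show (compOp da id good_da_id x + compOp bnd id good_bnd x : Hsp) q
      = ((1 : Hsp →L[ℂ] Hsp) x) q
  rw [hadd, ContinuousLinearMap.one_apply, Pi.add_apply, compOp_apply, compOp_apply]
  by_cases h : 0 < q.1.2.1 ∧ 0 < q.1.2.2
  · rw [da, if_pos h, bnd, if_neg (by omega)]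
    show 1 * x q + 0 * x q = x q
    ring
  · rw [da, if_neg h, bnd, if_pos (by omega)]
    show 0 * x q + 1 * x q = x q
    ring

theorem bv_formula_a (p : Idx) :
    opA (bv p) =
      if 0 < p.1.2.1 ∧ 0 < p.1.2.2 then
        vec ((p.1.1 : ℤ) - 1) ((p.1.2.1 : ℤ) - 1) ((p.1.2.2 : ℤ) - 1)
      else 0 := by
  have hb := p.2
  by_cases h : 0 < p.1.2.1 ∧ 0 < p.1.2.2
  · rw [if_pos h]
    have hH : Ha (Ka p) = p := by
      have kc := Ka_coord p
      have hc := Ha_coord (Ka p)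
      apply idx_eq <;> omega
    rw [opA, compOp_bv good_a hH (ca_ne _), ca, one_smul, vec,
      dif_pos (by refine ⟨?_, ?_, ?_, ?_, ?_⟩ <;> omega)]
    congr 1
    have kc := Ka_coord p
    apply idx_eq <;> simp only <;> omega
  · rw [if_neg h]
    apply compOp_bv_zero
    intro q _ hq
    rw [idx_eq_iff] at hq
    have hc := Ha_coord q
    omega

theorem bv_formula_b (p : Idx) :
    opB (bv p) =
      if p.1.2.2 = 0 then -vec ((p.1.1 : ℤ) + 1) ((p.1.2.1 : ℤ) + 1) 0
      else if p.1.2.1 = 0 then vec ((p.1.1 : ℤ) - 1) 0 ((p.1.2.2 : ℤ) - 1)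
      else 0 := by
  have hb := p.2
  by_cases h : p.1.2.2 = 0
  · rw [if_pos h]
    have kc := Kb_coord_pos h
    have hH : Hb (Kb p) = p := by
      obtain ⟨g1, g2, g3⟩ := Hb_coord_pos (q := Kb p) (by omega)
      apply idx_eq <;> omega
    have hcb : cb (Kb p) = -1 := by rw [cb, if_pos (by omega)]
    rw [opB, compOp_bv good_b hH (by rw [hcb]; norm_num), hcb, vec,
      dif_pos (by refine ⟨?_, ?_, ?_, ?_, ?_⟩ <;> omega)]
    rw [neg_one_smul]
    congr 1
    congr 1
    apply idx_eq <;> simp only <;> omega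
  · rw [if_neg h]
    by_cases h2 : p.1.2.1 = 0
    · rw [if_pos h2]
      have kc := Kb_coord_neg h
      have hH : Hb (Kb p) = p := by
        obtain ⟨g1, g2, g3⟩ := Hb_coord_neg (q := Kb p) (by omega)
        apply idx_eq <;> omega
      have hcb : cb (Kb p) = 1 := by rw [cb, if_neg (by omega), if_pos kc.2.1]
      rw [opB, compOp_bv good_b hH (by rw [hcb]; norm_num), hcb, one_smul, vec,
        dif_pos (by refine ⟨?_, ?_, ?_, ?_, ?_⟩ <;> omega)]
      congr 1
      apply idx_eq <;> simp only <;> omega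
    · rw [if_neg h2]
      apply compOp_bv_zero
      intro q hq hqp
      rw [idx_eq_iff] at hqp
      rcases cb_cases hq with h1 | h1
      · have hc := Hb_coord_pos h1
        omega
      · have hc := Hb_coord_neg h1.1
        omega

theorem rel_proj :
    compOp bnd id good_bnd =
      projCLM
        ((Submodule.span ℂ
          (bv '' {p : Idx | p.1.2.1 = 0 ∨ p.1.2.2 = 0})).topologicalClosure)
        (Submodule.isClosed_topologicalClosure _) := by
  set M : Submodule ℂ Hsp :=
    Submodule.span ℂ (bv '' {p : Idx | p.1.2.1 = 0 ∨ p.1.2.2 = 0}) with hM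
  set K : Submodule ℂ Hsp := M.topologicalClosure with hKdef
  haveI : CompleteSpace K := (Submodule.isClosed_topologicalClosure M).completeSpace_coe
  apply ContinuousLinearMap.ext
  intro x
  set v : Hsp := compOp bnd id good_bnd x with hv
  have hvq : ∀ q : Idx, (v : ∀ _ : Idx, ℂ) q = bnd q * x q := fun q => rfl
  have hsingle : ∀ q : Idx, lp.single 2 q ((v : ∀ _ : Idx, ℂ) q) = (v : ∀ _ : Idx, ℂ) q • bv q := by
    intro q
    rw [bv, ← lp.single_smul, smul_eq_mul, mul_one]
  -- v ∈ K
  have hmem : v ∈ K := by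
    have hsum : HasSum (fun q : Idx => lp.single 2 q ((v : ∀ _ : Idx, ℂ) q)) v :=
      lp.hasSum_single ENNReal.ofNat_ne_top v
    refine (Submodule.isClosed_topologicalClosure M).mem_of_tendsto hsum
      (Filter.Eventually.of_forall ?_)
    intro s
    apply Submodule.sum_mem
    intro q _
    rw [hsingle q]
    by_cases hq : q.1.2.1 = 0 ∨ q.1.2.2 = 0
    · exact Submodule.smul_mem _ _
        (M.le_topologicalClosure (Submodule.subset_span ⟨q, hq, rfl⟩))
    · have : (v : ∀ _ : Idx, ℂ) q = 0 := by
        rw [hvq, bnd, if_neg hq, zero_mul]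
      rw [this, zero_smul]
      exact Submodule.zero_mem _
  -- x - v ⊥ K
  have hortho : ∀ w ∈ K, ⟪x - v, w⟫ = 0 := by
    have hsub : ((x - v : Hsp) : ∀ _ : Idx, ℂ) = (x : ∀ _ : Idx, ℂ) - v := lp.coeFn_sub x v
    have hgen : ∀ w ∈ (bv '' {p : Idx | p.1.2.1 = 0 ∨ p.1.2.2 = 0}), ⟪x - v, w⟫ = 0 := by
      rintro w ⟨p, hp, rfl⟩
      rw [← inner_conj_symm]
      rw [show (bv p : Hsp) = lp.single 2 p 1 from rfl, lp.inner_single_left]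
      have hp' : p.1.2.1 = 0 ∨ p.1.2.2 = 0 := hp
      have : ((x - v : Hsp) : ∀ _ : Idx, ℂ) p = 0 := by
        rw [hsub, Pi.sub_apply, hvq, bnd, if_pos hp', one_mul, sub_self]
      rw [this]
      simp
    have hspan : ∀ w ∈ M, ⟪x - v, w⟫ = 0 := by
      intro w hw
      induction hw using Submodule.span_induction with
      | mem w hw => exact hgen w hw
      | zero => exact inner_zero_right _
      | add w₁ w₂ _ _ ih1 ih2 => rw [inner_add_right, ih1, ih2, add_zero]
      | smul a w _ ih => rw [inner_smul_right, ih, mul_zero]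
    intro w hw
    have hclosed : IsClosed {w : Hsp | ⟪x - v, w⟫ = 0} :=
      isClosed_eq (Continuous.inner continuous_const continuous_id) continuous_const
    have hsubset : (M : Set Hsp) ⊆ {w : Hsp | ⟪x - v, w⟫ = 0} := hspan
    have : (K : Set Hsp) ⊆ {w : Hsp | ⟪x - v, w⟫ = 0} := by
      rw [hKdef, Submodule.topologicalClosure_coe]
      exact closure_minimal hsubset hclosed
    exact this hw
  have := Submodule.eq_starProjection_of_mem_of_inner_eq_zero (K := K) (u := x) hmem hortho
  rw [projCLM, ContinuousLinearMap.comp_apply, Submodule.subtypeL_apply]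
  exact this.symm

end QSU2

/-- The `q = 0` operators `α, β` on `ℓ²(Λ)` satisfy
`α*α + β*β = 1`, `αα* = 1`, `αβ = 0`, `αβ* = 0`, `ββ* = β*β`, and `β*β` is the
orthogonal projection onto the closed span of the basis vectors with `i = -n` or
`j = -n` (i.e. `x = 0` or `y = 0`). -/
theorem stmt_1 :
    ∃ α β : Hsp →L[ℂ] Hsp,
      (∀ p : Idx,
        α (bv p) =
          if 0 < p.1.2.1 ∧ 0 < p.1.2.2 then
            vec ((p.1.1 : ℤ) - 1) ((p.1.2.1 : ℤ) - 1) ((p.1.2.2 : ℤ) - 1)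
          else 0) ∧
      (∀ p : Idx,
        β (bv p) =
          if p.1.2.2 = 0 then -vec ((p.1.1 : ℤ) + 1) ((p.1.2.1 : ℤ) + 1) 0
          else if p.1.2.1 = 0 then vec ((p.1.1 : ℤ) - 1) 0 ((p.1.2.2 : ℤ) - 1)
          else 0) ∧
      ContinuousLinearMap.adjoint α ∘L α + ContinuousLinearMap.adjoint β ∘L β = 1 ∧
      α ∘L ContinuousLinearMap.adjoint α = 1 ∧
      α ∘L β = 0 ∧
      α ∘L ContinuousLinearMap.adjoint β = 0 ∧
      β ∘L ContinuousLinearMap.adjoint β = ContinuousLinearMap.adjoint β ∘L β ∧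
      ContinuousLinearMap.adjoint β ∘L β =
        projCLM
          ((Submodule.span ℂ
            (bv '' {p : Idx | p.1.2.1 = 0 ∨ p.1.2.2 = 0})).topologicalClosure)
          (Submodule.isClosed_topologicalClosure _) := by
  refine ⟨QSU2.opA, QSU2.opB, QSU2.bv_formula_a, QSU2.bv_formula_b, QSU2.rel_sum,
    QSU2.rel_aastar, QSU2.rel_ab, QSU2.rel_abstar, ?_, ?_⟩
  · rw [QSU2.rel_bbstar, QSU2.rel_bstarb]
  · rw [QSU2.rel_bstarb, QSU2.rel_proj]
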